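/- Non-existence of a type-only encoding of simple variant subtyping as presence polymorphism: there is no global, compositional, type-only translation from λ_⟨⟩^{≤} (variants with width subtyping) to λ_⟨⟩^{θ} (variants with presence polymorphism) preserving typing. Concretely, under Δ = α₀, Γ = y:α₀, the terms (ℓ₁ y)^{⟨ℓ₁:α₀; ℓ₂:α₀⟩} and (ℓ₁ y)^{⟨ℓ₁:α₀⟩} ▷ ⟨ℓ₁:α₀; ℓ₂:α₀⟩ have the same source type, but since ℓ₂ is arbitrary and presence polymorphism cannot add new labels to a row, their type-only translations cannot have equal target types. -/

import Mathlib

namespace Stmt11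

abbrev Label := ℕ

/-- Types of λ_⟨⟩^{≤}: base type variables, functions, variant types over rows. -/
inductive Ty : Type where
  | tvar : ℕ → Ty
  | arrow : Ty → Ty → Ty
  | variant : List (Label × Ty) → Ty

/-- Simple (width) variant subtyping on rows:
dom(R) ⊆ dom(R') and R'|_{dom R} = R. -/
def VSub (R R' : List (Label × Ty)) : Prop :=
  ∀ ℓ A, List.lookup ℓ R = some A → List.lookup ℓ R' = some A

/-- Subtyping on types of λ_⟨⟩^{≤}: only the shallow variant rule. -/
inductive Sub : Ty → Ty → Prop where
  | variant {R R'} : VSub R R' → Sub (.variant R) (.variant R')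

/-- Terms, de Bruijn indices.  `inj ℓ M A` is the annotated injection (ℓ M)^A and
`upcast M A B` is the annotated upcast M^A ▷ B. -/
inductive Tm : Type where
  | var : ℕ → Tm
  | lam : Ty → Tm → Tm
  | app : Tm → Tm → Tm
  | inj : Label → Tm → Ty → Tm
  | case : Tm → List (Label × Tm) → Tm
  | upcast : Tm → Ty → Ty → Tm

mutual
/-- Shift de Bruijn indices ≥ c up by one. -/
def shiftTm (c : ℕ) : Tm → Tm
  | .var n => if n < c then .var n else .var (n + 1)
  | .lam A M => .lam A (shiftTm (c + 1) M)
  | .app M N => .app (shiftTm c M) (shiftTm c N)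
  | .inj ℓ M A => .inj ℓ (shiftTm c M) A
  | .case M Bs => .case (shiftTm c M) (shiftBs (c + 1) Bs)
  | .upcast M A B => .upcast (shiftTm c M) A B
def shiftBs (c : ℕ) : List (Label × Tm) → List (Label × Tm)
  | [] => []
  | (ℓ, M) :: Bs => (ℓ, shiftTm c M) :: shiftBs c Bs
end

mutual
/-- Capture-avoiding substitution of N for de Bruijn index k. -/
def substTm (k : ℕ) (N : Tm) : Tm → Tm
  | .var n => if n = k then N else if n < k then .var n else .var (n - 1)
  | .lam A M => .lam A (substTm (k + 1) (shiftTm 0 N) M)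
  | .app M₁ M₂ => .app (substTm k N M₁) (substTm k N M₂)
  | .inj ℓ M A => .inj ℓ (substTm k N M) A
  | .case M Bs => .case (substTm k N M) (substBs (k + 1) (shiftTm 0 N) Bs)
  | .upcast M A B => .upcast (substTm k N M) A B
def substBs (k : ℕ) (N : Tm) : List (Label × Tm) → List (Label × Tm)
  | [] => []
  | (ℓ, M) :: Bs => (ℓ, substTm k N M) :: substBs k N Bs
end

/-- Typing of λ_⟨⟩^{≤} (contexts are de Bruijn lists of types). -/
inductive HasTy : List Ty → Tm → Ty → Prop where
  | var {Γ n A} : Γ[n]? = some A → HasTy Γ (.var n) A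
  | lam {Γ A B M} : HasTy (A :: Γ) M B → HasTy Γ (.lam A M) (.arrow A B)
  | app {Γ A B M N} : HasTy Γ M (.arrow A B) → HasTy Γ N A → HasTy Γ (.app M N) B
  | inj {Γ ℓ R A M} : List.lookup ℓ R = some A → HasTy Γ M A →
      HasTy Γ (.inj ℓ M (.variant R)) (.variant R)
  | case {Γ R M Bs C} : HasTy Γ M (.variant R) →
      (∀ ℓ A, List.lookup ℓ R = some A → (List.lookup ℓ Bs).isSome) →
      (∀ ℓ A N, List.lookup ℓ R = some A → List.lookup ℓ Bs = some N →
        HasTy (A :: Γ) N C) →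
      HasTy Γ (.case M Bs) C
  | upcast {Γ R R' M} : HasTy Γ M (.variant R) → VSub R R' →
      HasTy Γ (.upcast M (.variant R) (.variant R')) (.variant R')


/-! ### Typing derivations of λ_⟨⟩^{≤} as data. -/

mutual
inductive Deriv : List Ty → Tm → Ty → Type where
  | var {Γ n A} : Γ[n]? = some A → Deriv Γ (.var n) A
  | lam {Γ A B M} : Deriv (A :: Γ) M B → Deriv Γ (.lam A M) (.arrow A B)
  | app {Γ A B M N} : Deriv Γ M (.arrow A B) → Deriv Γ N A → Deriv Γ (.app M N) B
  | inj {Γ ℓ R A M} : List.lookup ℓ R = some A → Deriv Γ M A →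
      Deriv Γ (.inj ℓ M (.variant R)) (.variant R)
  | case {Γ R M Bs C} : Deriv Γ M (.variant R) → DerivBs Γ R Bs C →
      Deriv Γ (.case M Bs) C
  | upcast {Γ R R' M} : Deriv Γ M (.variant R) → VSub R R' →
      Deriv Γ (.upcast M (.variant R) (.variant R')) (.variant R')
inductive DerivBs : List Ty → List (Label × Ty) → List (Label × Tm) → Ty → Type where
  | nil {Γ C} : DerivBs Γ [] [] C
  | cons {Γ ℓ A N R Bs C} : Deriv (A :: Γ) N C → DerivBs Γ R Bs C →
      DerivBs Γ ((ℓ, A) :: R) ((ℓ, N) :: Bs) C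
end

/-! ### The target calculus λ_⟨⟩^{θ}: variants with presence polymorphism. -/

/-- Presence annotations: absent, present, or a presence variable (de Bruijn). -/
inductive Pre : Type where
  | abs : Pre
  | pres : Pre
  | pvar : ℕ → Pre

/-- Target types: presence-annotated variant rows and presence quantification. -/
inductive PTy : Type where
  | tvar : ℕ → PTy
  | arrow : PTy → PTy → PTy
  | variant : List (Label × Pre × PTy) → PTy
  | pall : PTy → PTy

def shiftPre (c : ℕ) : Pre → Pre
  | .pvar n => if n < c then .pvar n else .pvar (n + 1)
  | p => p

mutual
def shiftPTy (c : ℕ) : PTy → PTy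
  | .tvar n => .tvar n
  | .arrow A B => .arrow (shiftPTy c A) (shiftPTy c B)
  | .variant es => .variant (shiftPEs c es)
  | .pall A => .pall (shiftPTy (c + 1) A)
def shiftPEs (c : ℕ) : List (Label × Pre × PTy) → List (Label × Pre × PTy)
  | [] => []
  | (ℓ, P, A) :: es => (ℓ, shiftPre c P, shiftPTy c A) :: shiftPEs c es
end

def substPre (k : ℕ) (P : Pre) : Pre → Pre
  | .pvar n => if n = k then P else if n < k then .pvar n else .pvar (n - 1)
  | p => p

mutual
def substPTy (k : ℕ) (P : Pre) : PTy → PTy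
  | .tvar n => .tvar n
  | .arrow A B => .arrow (substPTy k P A) (substPTy k P B)
  | .variant es => .variant (substPEs k P es)
  | .pall A => .pall (substPTy (k + 1) (shiftPre 0 P) A)
def substPEs (k : ℕ) (P : Pre) : List (Label × Pre × PTy) → List (Label × Pre × PTy)
  | [] => []
  | (ℓ, Q, A) :: es => (ℓ, substPre k P Q, substPTy k P A) :: substPEs k P es
end

/-- Type equivalence: rows compared ignoring label order and absent labels. -/
inductive PTyEquiv : PTy → PTy → Prop where
  | refl (A) : PTyEquiv A A
  | symm {A B} : PTyEquiv A B → PTyEquiv B A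
  | trans {A B C} : PTyEquiv A B → PTyEquiv B C → PTyEquiv A C
  | arrow {A A' B B'} : PTyEquiv A A' → PTyEquiv B B' →
      PTyEquiv (.arrow A B) (.arrow A' B')
  | pall {A A'} : PTyEquiv A A' → PTyEquiv (.pall A) (.pall A')
  | variantCongr {es es'} :
      es.map (fun q => (q.1, q.2.1)) = es'.map (fun q => (q.1, q.2.1)) →
      (∀ (i : ℕ) (p q : Label × Pre × PTy), es[i]? = some p → es'[i]? = some q →
        PTyEquiv p.2.2 q.2.2) →
      PTyEquiv (.variant es) (.variant es')
  | variantPerm {es es'} : List.Perm es es' →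
      PTyEquiv (.variant es) (.variant es')
  | variantAbsent {es₁ es₂ ℓ A} :
      PTyEquiv (.variant (es₁ ++ (ℓ, Pre.abs, A) :: es₂)) (.variant (es₁ ++ es₂))

/-- Target terms: λ_⟨⟩ plus presence abstraction and application. -/
inductive PTm : Type where
  | var : ℕ → PTm
  | lam : PTy → PTm → PTm
  | app : PTm → PTm → PTm
  | inj : Label → PTm → PTy → PTm
  | case : PTm → List (Label × PTm) → PTm
  | plam : PTm → PTm
  | papp : PTm → Pre → PTm

/-- Typing of λ_⟨⟩^{θ}. -/
inductive PHasTy : List PTy → PTm → PTy → Prop where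
  | var {Γ n A} : Γ[n]? = some A → PHasTy Γ (.var n) A
  | lam {Γ A B M} : PHasTy (A :: Γ) M B → PHasTy Γ (.lam A M) (.arrow A B)
  | app {Γ A B M N} : PHasTy Γ M (.arrow A B) → PHasTy Γ N A → PHasTy Γ (.app M N) B
  | inj {Γ ℓ es A M} : List.lookup ℓ es = some (Pre.pres, A) → PHasTy Γ M A →
      PHasTy Γ (.inj ℓ M (.variant es)) (.variant es)
  | case {Γ es M Bs C} : PHasTy Γ M (.variant es) →
      (∀ ℓ P A, List.lookup ℓ es = some (P, A) → (List.lookup ℓ Bs).isSome) →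
      (∀ ℓ P A N, List.lookup ℓ es = some (P, A) → List.lookup ℓ Bs = some N →
        PHasTy (A :: Γ) N C) →
      PHasTy Γ (.case M Bs) C
  | plam {Γ M A} : PHasTy (Γ.map (shiftPTy 0)) M A → PHasTy Γ (.plam M) (.pall A)
  | papp {Γ M A P} : PHasTy Γ M (.pall A) → PHasTy Γ (.papp M P) (substPTy 0 P A)
  | conv {Γ M A A'} : PHasTy Γ M A → PTyEquiv A A' → PHasTy Γ M A'

/-! ### Untyped terms and erasure. -/

/-- Untyped λ_⟨⟩ terms. -/
inductive UTm : Type where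
  | var : ℕ → UTm
  | lam : UTm → UTm
  | app : UTm → UTm → UTm
  | inj : Label → UTm → UTm
  | case : UTm → List (Label × UTm) → UTm

mutual
/-- Erasure of source terms: drop upcasts and type annotations. -/
def eraseS : Tm → UTm
  | .var n => .var n
  | .lam _ M => .lam (eraseS M)
  | .app M N => .app (eraseS M) (eraseS N)
  | .inj ℓ M _ => .inj ℓ (eraseS M)
  | .case M Bs => .case (eraseS M) (eraseSBs Bs)
  | .upcast M _ _ => eraseS M
def eraseSBs : List (Label × Tm) → List (Label × UTm)
  | [] => []
  | (ℓ, M) :: Bs => (ℓ, eraseS M) :: eraseSBs Bs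
end

mutual
/-- Erasure of target terms: drop presence abstractions, presence applications
and type annotations. -/
def eraseP : PTm → UTm
  | .var n => .var n
  | .lam _ M => .lam (eraseP M)
  | .app M N => .app (eraseP M) (eraseP N)
  | .inj ℓ M _ => .inj ℓ (eraseP M)
  | .case M Bs => .case (eraseP M) (erasePBs Bs)
  | .plam M => eraseP M
  | .papp M _ => eraseP M
def erasePBs : List (Label × PTm) → List (Label × UTm)
  | [] => []
  | (ℓ, M) :: Bs => (ℓ, eraseP M) :: erasePBs Bs
end

/-!
STATEMENT 11: There is no type-only translation from λ_⟨⟩^{≤} to λ_⟨⟩^{θ}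
preserving typing: no translation of derivations that (i) sends every
derivation of Δ;Γ ⊢ M : A to a target term of type ⟦A⟧ in context ⟦Γ⟧ for a
fixed type translation ⟦-⟧, and (ii) is type-only, i.e. the translated term
erases to the erasure of the source term.
-/
/-! ### Auxiliary machinery for the impossibility proof. -/

def isPres : Pre → Bool
  | .pres => true
  | _ => false

def isPot : Pre → Bool
  | .abs => false
  | _ => true

/-- Labels present (presence `pres`) in the top-level row of a type. -/
def presL : PTy → List Label
  | .variant es => es.filterMap (fun q => if isPres q.2.1 then some q.1 else none)
  | .pall A => presL A
  | _ => []

/-- Labels possibly present (presence not `abs`) in the top-level row. -/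
def potL : PTy → List Label
  | .variant es => es.filterMap (fun q => if isPot q.2.1 then some q.1 else none)
  | .pall A => potL A
  | _ => []

lemma substPEs_eq (k : ℕ) (P : Pre) :
    ∀ es, substPEs k P es =
      es.map (fun q => (q.1, substPre k P q.2.1, substPTy k P q.2.2)) := by
  intro es
  induction es with
  | nil => simp [substPEs]
  | cons q es ih => obtain ⟨ℓ, Q, A⟩ := q; simp [substPEs, ih]

lemma shiftPEs_eq (c : ℕ) :
    ∀ es, shiftPEs c es =
      es.map (fun q => (q.1, shiftPre c q.2.1, shiftPTy c q.2.2)) := by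
  intro es
  induction es with
  | nil => simp [shiftPEs]
  | cons q es ih => obtain ⟨ℓ, Q, A⟩ := q; simp [shiftPEs, ih]

lemma isPres_substPre {k P Q} (h : isPres Q = true) : isPres (substPre k P Q) = true := by
  cases Q <;> simp_all [isPres, substPre]

lemma isPot_substPre {k P Q} (h : isPot (substPre k P Q) = true) : isPot Q = true := by
  cases Q <;> simp_all [isPot, substPre]

lemma isPot_shiftPre {c Q} (h : isPot (shiftPre c Q) = true) : isPot Q = true := by
  cases Q <;> simp_all [isPot, shiftPre]

lemma mem_presL_subst {ℓ} : ∀ {A : PTy} (k : ℕ) (P : Pre),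
    ℓ ∈ presL A → ℓ ∈ presL (substPTy k P A) := by
  intro A
  induction A using presL.induct with
  | case1 es =>
      intro k P h
      simp only [presL, List.mem_filterMap] at h
      obtain ⟨q, hq, hsome⟩ := h
      simp only [substPTy, substPEs_eq, presL, List.mem_filterMap]
      refine ⟨(q.1, substPre k P q.2.1, substPTy k P q.2.2), List.mem_map_of_mem hq, ?_⟩
      by_cases hp : isPres q.2.1 = true
      · simp_all [isPres_substPre hp]
      · simp_all
  | case2 A ih =>
      intro k P h
      simp only [presL] at h ⊢
      simpa [substPTy, presL] using ih (k + 1) (shiftPre 0 P) h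
  | case3 A h1 h2 =>
      intro k P h
      rcases A with _ | _ | _ | _ <;> simp_all [presL]

lemma mem_potL_subst {ℓ} : ∀ {A : PTy} (k : ℕ) (P : Pre),
    ℓ ∈ potL (substPTy k P A) → ℓ ∈ potL A := by
  intro A
  induction A using potL.induct with
  | case1 es =>
      intro k P h
      simp only [substPTy, substPEs_eq, potL, List.mem_filterMap, List.mem_map] at h
      obtain ⟨q', ⟨q, hq, rfl⟩, hsome⟩ := h
      simp only [potL, List.mem_filterMap]
      refine ⟨q, hq, ?_⟩
      by_cases hp : isPot (substPre k P q.2.1) = true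
      · simp_all [isPot_substPre hp]
      · simp_all
  | case2 A ih =>
      intro k P h
      simp only [substPTy, potL] at h ⊢
      exact ih (k + 1) (shiftPre 0 P) h
  | case3 A h1 h2 =>
      intro k P h
      rcases A with _ | _ | _ | _ <;> simp_all [potL, substPTy]

lemma mem_potL_shift {ℓ} : ∀ {A : PTy} (c : ℕ),
    ℓ ∈ potL (shiftPTy c A) → ℓ ∈ potL A := by
  intro A
  induction A using potL.induct with
  | case1 es =>
      intro c h
      simp only [shiftPTy, shiftPEs_eq, potL, List.mem_filterMap, List.mem_map] at h
      obtain ⟨q', ⟨q, hq, rfl⟩, hsome⟩ := h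
      simp only [potL, List.mem_filterMap]
      refine ⟨q, hq, ?_⟩
      by_cases hp : isPot (shiftPre c q.2.1) = true
      · simp_all [isPot_shiftPre hp]
      · simp_all
  | case2 A ih =>
      intro c h
      simp only [shiftPTy, potL] at h ⊢
      exact ih (c + 1) h
  | case3 A h1 h2 =>
      intro c h
      rcases A with _ | _ | _ | _ <;> simp_all [potL, shiftPTy]

lemma mem_potL_of_presL {ℓ} : ∀ {A : PTy}, ℓ ∈ presL A → ℓ ∈ potL A := by
  intro A
  induction A using presL.induct with
  | case1 es =>
      intro h
      simp only [presL, List.mem_filterMap] at h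
      obtain ⟨q, hq, hsome⟩ := h
      simp only [potL, List.mem_filterMap]
      refine ⟨q, hq, ?_⟩
      by_cases hp : isPres q.2.1 = true
      · cases hq2 : q.2.1 <;> simp_all [isPres, isPot]
      · simp_all
  | case2 A ih => intro h; simp only [presL, potL] at *; exact ih h
  | case3 A h1 h2 => intro h; rcases A with _ | _ | _ | _ <;> simp_all [presL, potL]

/-- Type equivalence preserves the sets of present and potential labels. -/
lemma equiv_mem {A B : PTy} (h : PTyEquiv A B) :
    ∀ ℓ, (ℓ ∈ presL A ↔ ℓ ∈ presL B) ∧ (ℓ ∈ potL A ↔ ℓ ∈ potL B) := by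
  induction h with
  | refl A => intro ℓ; exact ⟨Iff.rfl, Iff.rfl⟩
  | symm _ ih => intro ℓ; exact ⟨(ih ℓ).1.symm, (ih ℓ).2.symm⟩
  | trans _ _ ih1 ih2 =>
      intro ℓ; exact ⟨(ih1 ℓ).1.trans (ih2 ℓ).1, (ih1 ℓ).2.trans (ih2 ℓ).2⟩
  | arrow _ _ _ _ => intro ℓ; simp [presL, potL]
  | pall _ ih => intro ℓ; simpa [presL, potL] using ih ℓ
  | @variantCongr es es' hmap _ _ =>
      intro ℓ
      have key : ∀ (f : Label × Pre → Option Label),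
          es.filterMap (fun q => f (q.1, q.2.1)) =
          es'.filterMap (fun q => f (q.1, q.2.1)) := by
        intro f
        have h1 : es.filterMap (fun q => f (q.1, q.2.1)) =
            (es.map (fun q => (q.1, q.2.1))).filterMap f := by
          rw [List.filterMap_map]; rfl
        have h2 : es'.filterMap (fun q => f (q.1, q.2.1)) =
            (es'.map (fun q => (q.1, q.2.1))).filterMap f := by
          rw [List.filterMap_map]; rfl
        rw [h1, h2, hmap]
      constructor
      · simp only [presL]
        rw [key (fun p => if isPres p.2 then some p.1 else none)]
      · simp only [potL]
        rw [key (fun p => if isPot p.2 then some p.1 else none)]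
  | variantPerm hperm =>
      intro ℓ
      constructor
      · simp only [presL]; exact (hperm.filterMap _).mem_iff
      · simp only [potL]; exact (hperm.filterMap _).mem_iff
  | variantAbsent =>
      intro ℓ
      constructor
      · simp [presL, List.filterMap_append, isPres]
      · simp [potL, List.filterMap_append, isPot]

lemma lookup_mem {β : Type _} {a : Label} {b : β} :
    ∀ {l : List (Label × β)}, List.lookup a l = some b → (a, b) ∈ l := by
  intro l
  induction l with
  | nil => simp [List.lookup]
  | cons p l ih =>
      obtain ⟨x, y⟩ := p
      intro h
      rw [List.lookup] at h
      by_cases hax : a = x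
      · subst hax; simp at h; subst h; exact List.mem_cons_self
      · have : (a == x) = false := beq_false_of_ne hax
        rw [this] at h
        exact List.mem_cons_of_mem _ (ih h)

lemma mem_presL_of_lookup {ℓ : Label} {es A} (h : List.lookup ℓ es = some (Pre.pres, A)) :
    ℓ ∈ presL (.variant es) := by
  have hm : (ℓ, Pre.pres, A) ∈ es := lookup_mem h
  simp only [presL, List.mem_filterMap]
  exact ⟨(ℓ, Pre.pres, A), hm, by simp [isPres]⟩

/-- Any target term erasing to an injection of `ℓ` has `ℓ` present in its type. -/
lemma inj_presL {Γ N S} (h : PHasTy Γ N S) :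
    ∀ ℓ u, eraseP N = .inj ℓ u → ℓ ∈ presL S := by
  induction h with
  | var _ => intro ℓ u he; simp [eraseP] at he
  | lam _ _ => intro ℓ u he; simp [eraseP] at he
  | app _ _ _ _ => intro ℓ u he; simp [eraseP] at he
  | case _ _ _ _ _ => intro ℓ u he; simp [eraseP] at he
  | inj hlk _ _ =>
      intro ℓ u he
      simp only [eraseP, UTm.inj.injEq] at he
      obtain ⟨rfl, -⟩ := he
      exact mem_presL_of_lookup hlk
  | plam _ ih =>
      intro ℓ u he
      simp only [eraseP] at he
      simpa [presL] using ih ℓ u he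
  | papp _ ih =>
      intro ℓ u he
      simp only [eraseP] at he
      have := ih ℓ u he
      simp only [presL] at this
      exact mem_presL_subst 0 _ this
  | conv _ heq ih =>
      intro ℓ u he
      exact ((equiv_mem heq ℓ).1).mp (ih ℓ u he)

/-- Any target term erasing to a variable has its potential labels bounded by
those of the corresponding context type. -/
lemma var_potL {Γ N S} (h : PHasTy Γ N S) :
    ∀ n, eraseP N = .var n →
      ∃ T, Γ[n]? = some T ∧ ∀ ℓ, ℓ ∈ potL S → ℓ ∈ potL T := by
  induction h with
  | var hg =>
      intro n he
      simp only [eraseP, UTm.var.injEq] at he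
      subst he
      exact ⟨_, hg, fun ℓ h => h⟩
  | lam _ _ => intro n he; simp [eraseP] at he
  | app _ _ _ _ => intro n he; simp [eraseP] at he
  | inj _ _ _ => intro n he; simp [eraseP] at he
  | case _ _ _ _ _ => intro n he; simp [eraseP] at he
  | @plam Γ M A _ ih =>
      intro n he
      simp only [eraseP] at he
      obtain ⟨T', hg, hsub⟩ := ih n he
      rw [List.getElem?_map] at hg
      obtain ⟨T, hT, rfl⟩ := Option.map_eq_some_iff.mp hg
      refine ⟨T, hT, fun ℓ hℓ => ?_⟩
      have : ℓ ∈ potL A := by simpa [potL] using hℓ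
      exact mem_potL_shift 0 (hsub ℓ this)
  | papp _ ih =>
      intro n he
      simp only [eraseP] at he
      obtain ⟨T, hT, hsub⟩ := ih n he
      refine ⟨T, hT, fun ℓ hℓ => ?_⟩
      have := mem_potL_subst 0 _ hℓ
      simp only [potL] at hsub
      exact hsub ℓ this
  | conv _ heq ih =>
      intro n he
      obtain ⟨T, hT, hsub⟩ := ih n he
      exact ⟨T, hT, fun ℓ hℓ => hsub ℓ (((equiv_mem heq ℓ).2).mpr hℓ)⟩

lemma le_foldr_max {x : ℕ} : ∀ {l : List ℕ}, x ∈ l → x ≤ l.foldr max 0 := by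
  intro l
  induction l with
  | nil => simp
  | cons a l ih =>
      intro h
      rcases List.mem_cons.mp h with rfl | h
      · simp only [List.foldr_cons]
        exact le_max_left _ _
      · simp only [List.foldr_cons]
        exact le_trans (ih h) (le_max_right _ _)

theorem no_type_only_encoding :
    ¬ ∃ (trTy : Ty → PTy)
        (trD : ∀ (Γ : List Ty) (M : Tm) (A : Ty), Deriv Γ M A → PTm),
      (∀ Γ M A (d : Deriv Γ M A), PHasTy (Γ.map trTy) (trD Γ M A d) (trTy A)) ∧
      (∀ Γ M A (d : Deriv Γ M A), eraseP (trD Γ M A d) = eraseS M) := by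
  rintro ⟨trTy, trD, h1, h2⟩
  -- the translated type of the small variant ⟨ℓ₁ : α₀⟩ with ℓ₁ = 0
  set R₁ : List (Label × Ty) := [(0, .tvar 0)] with hR₁
  set T : PTy := trTy (.variant R₁) with hT
  -- a label fresh for T
  set ℓ : Label := (potL T).foldr max 0 + 1 with hℓ
  have hfresh : ℓ ∉ potL T := fun hmem => by
    have := le_foldr_max hmem; omega
  have hℓ0 : ℓ ≠ 0 := by rw [hℓ]; exact Nat.succ_ne_zero _
  set R₂ : List (Label × Ty) := [(0, .tvar 0), (ℓ, .tvar 0)] with hR₂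
  have hlk2 : List.lookup ℓ R₂ = some (.tvar 0) := by
    have : (ℓ == (0 : ℕ)) = false := by simpa using hℓ0
    simp [hR₂, List.lookup, this]
  -- first derivation: injection directly at the larger row
  have dinj : Deriv [Ty.tvar 0] (.inj ℓ (.var 0) (.variant R₂)) (.variant R₂) :=
    .inj hlk2 (.var rfl)
  have hinj : ℓ ∈ presL (trTy (.variant R₂)) := by
    have ht := h1 _ _ _ dinj
    have he : eraseP (trD _ _ _ dinj) = .inj ℓ (.var 0) := by
      rw [h2]; simp [eraseS]
    exact inj_presL ht ℓ _ he
  -- second derivation: upcast of a variable from the small row to the larger row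
  have hvs : VSub R₁ R₂ := by
    intro ℓ' A hl
    simp only [hR₁, List.lookup] at hl
    by_cases h0 : ℓ' = 0
    · subst h0
      simp at hl
      subst hl
      simp [hR₂, List.lookup]
    · rw [beq_false_of_ne h0] at hl
      simp [List.lookup] at hl
  have dup : Deriv [Ty.variant R₁]
      (.upcast (.var 0) (.variant R₁) (.variant R₂)) (.variant R₂) :=
    .upcast (.var rfl) hvs
  have hup := h1 _ _ _ dup
  have heup : eraseP (trD _ _ _ dup) = .var 0 := by
    rw [h2]; simp [eraseS]
  obtain ⟨T', hT', hsub⟩ := var_potL hup 0 heup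
  simp only [List.map_cons, List.map_nil, List.getElem?_cons_zero] at hT'
  have hTT : T' = T := by
    injection hT' with h'
    exact h'.symm
  subst hTT
  exact hfresh (hsub ℓ (mem_potL_of_presL hinj))

end Stmt11
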